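/- Let k ≥ 2, n, s, t, o be nonnegative integers with o ≥ 2, n = o/2 + t + s (o even), s ≤ t, and n ≥ k−1. Define φ₁ = 6·(2(n−k+1) + 2kn + (o+2)·|(t−s)−(k−1)|) and φ₂ = 6·(4(n−k+1) + (o+2k)·(t−s)). Then φ₂ ≤ φ₁, with equality if and only if t−s ≥ k−1 and s = 0. -/
import Mathlib


/-- Key comparison of Lemma 3.1(1): `φ₂ ≤ φ₁`, with equality iff `t−s ≥ k−1` and `s = 0`. -/
theorem phi2_le_phi1 (k n s t o : ℕ) (hk : 2 ≤ k) (ho : 2 ≤ o) (hoe : Even o)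
    (hn : n = o / 2 + t + s) (hst : s ≤ t) (hnk : (k : ℤ) - 1 ≤ (n : ℤ)) :
    6 * (4 * ((n : ℤ) - (k : ℤ) + 1) + ((o : ℤ) + 2 * (k : ℤ)) * ((t : ℤ) - (s : ℤ))) ≤
      6 * (2 * ((n : ℤ) - (k : ℤ) + 1) + 2 * (k : ℤ) * (n : ℤ) +
        ((o : ℤ) + 2) * |((t : ℤ) - (s : ℤ)) - ((k : ℤ) - 1)|) ∧
    (6 * (4 * ((n : ℤ) - (k : ℤ) + 1) + ((o : ℤ) + 2 * (k : ℤ)) * ((t : ℤ) - (s : ℤ))) =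
      6 * (2 * ((n : ℤ) - (k : ℤ) + 1) + 2 * (k : ℤ) * (n : ℤ) +
        ((o : ℤ) + 2) * |((t : ℤ) - (s : ℤ)) - ((k : ℤ) - 1)|) ↔
      ((k : ℤ) - 1 ≤ (t : ℤ) - (s : ℤ) ∧ s = 0)) := by
  obtain ⟨m, hm⟩ := hoe
  have hod : o / 2 = m := by omega
  have h2 : (2 : ℤ) * n = (o : ℤ) + 2 * t + 2 * s := by
    have hn' : n = m + t + s := by omega
    have ho' : o = m + m := hm
    push_cast [hn', ho']; ring
  have hkz : (2 : ℤ) ≤ (k : ℤ) := by exact_mod_cast hk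
  have hoz : (2 : ℤ) ≤ (o : ℤ) := by exact_mod_cast ho
  have hsz : (0 : ℤ) ≤ (s : ℤ) := Int.natCast_nonneg s
  have hstz : (s : ℤ) ≤ (t : ℤ) := by exact_mod_cast hst
  by_cases h : (k : ℤ) - 1 ≤ (t : ℤ) - (s : ℤ)
  · rw [abs_of_nonneg (by linarith)]
    have key : 6 * (2 * ((n : ℤ) - (k : ℤ) + 1) + 2 * (k : ℤ) * (n : ℤ) +
        ((o : ℤ) + 2) * (((t : ℤ) - (s : ℤ)) - ((k : ℤ) - 1)))
        - 6 * (4 * ((n : ℤ) - (k : ℤ) + 1) + ((o : ℤ) + 2 * (k : ℤ)) * ((t : ℤ) - (s : ℤ)))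
        = 24 * (s : ℤ) * ((k : ℤ) - 1) := by linear_combination (6 * ((k : ℤ) - 1)) * h2
    constructor
    · nlinarith [mul_nonneg hsz (by linarith : (0 : ℤ) ≤ (k : ℤ) - 1)]
    · constructor
      · intro heq
        refine ⟨h, ?_⟩
        have hz : (s : ℤ) * ((k : ℤ) - 1) = 0 := by linarith
        rcases mul_eq_zero.mp hz with h1 | h2'
        · exact_mod_cast h1
        · linarith
      · rintro ⟨-, hs0⟩
        subst hs0
        simp at key ⊢
        linarith
  · rw [abs_of_neg (by linarith)]
    have hd : (t : ℤ) - (s : ℤ) ≤ (k : ℤ) - 2 := by linarith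
    have hu : (1 : ℤ) ≤ (k : ℤ) - 1 - ((t : ℤ) - (s : ℤ)) := by linarith
    have hstrict : 6 * (4 * ((n : ℤ) - (k : ℤ) + 1) + ((o : ℤ) + 2 * (k : ℤ)) * ((t : ℤ) - (s : ℤ))) <
        6 * (2 * ((n : ℤ) - (k : ℤ) + 1) + 2 * (k : ℤ) * (n : ℤ) +
          ((o : ℤ) + 2) * -(((t : ℤ) - (s : ℤ)) - ((k : ℤ) - 1))) := by
      nlinarith [mul_nonneg (by linarith : (0 : ℤ) ≤ (o : ℤ) - 2) (by linarith : (0 : ℤ) ≤ (k : ℤ) - 1 - ((t : ℤ) - (s : ℤ))),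
        mul_nonneg hsz (by linarith : (0 : ℤ) ≤ (k : ℤ) - 1)]
    refine ⟨le_of_lt hstrict, ?_⟩
    constructor
    · intro heq; exact absurd heq (ne_of_lt hstrict)
    · rintro ⟨h1, -⟩; exact absurd h1 h
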